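/- For any nonnegative integrable h : ℝ → ℝ with ∫₀^∞ s·h(s) ds < ∞, and any a > 0 and z > 0, one has ∫₀^z ∫_z^∞ h((s-s')/a)/a ds ds' ≤ a·∫₀^∞ s·h(s) ds. -/

import Mathlib

open MeasureTheory

/-- Affine substitution `s = a*u + s'` in a lintegral over a ray. -/
lemma lintegral_sub_div_ray (a z s' : ℝ) (ha : 0 < a) (h : ℝ → ℝ) (h_meas : Measurable h)
    (h_nonneg : ∀ t, 0 ≤ h t) :
    (∫⁻ s in Set.Ici z, ENNReal.ofReal (h ((s - s') / a) / a))
      = ∫⁻ u in Set.Ici ((z - s') / a), ENNReal.ofReal (h u) := by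
  have ha' : a ≠ 0 := ha.ne'
  set φ : ℝ → ℝ := fun u => a * u + s' with hφ
  have hφm : Measurable φ := (measurable_const.mul measurable_id).add measurable_const
  have hmap : Measure.map φ volume = ENNReal.ofReal |a⁻¹| • volume := by
    have hcc : Measure.map (fun x : ℝ => x + s') (Measure.map (fun u : ℝ => a * u) volume)
        = Measure.map φ volume :=
      Measure.map_map (measurable_id.add_const s') (measurable_const.mul measurable_id)
    rw [← hcc, Real.map_volume_mul_left ha', Measure.map_smul,
      map_add_right_eq_self volume s']
  have hfm : Measurable fun s => ENNReal.ofReal (h ((s - s') / a) / a) :=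
    (ENNReal.measurable_ofReal.comp ((h_meas.comp ((measurable_id.sub_const s').div_const a)).div_const a))
  have hpre : φ ⁻¹' Set.Ici z = Set.Ici ((z - s') / a) := by
    ext u
    simp only [Set.mem_preimage, Set.mem_Ici, hφ]
    rw [div_le_iff₀ ha, mul_comm]
    constructor <;> intro hu <;> linarith
  have key := setLIntegral_map (μ := volume) (measurableSet_Ici (a := z)) hfm hφm
  rw [hmap] at key
  simp only [Measure.restrict_smul, lintegral_smul_measure] at key
  have hcomp : ∀ u : ℝ, ENNReal.ofReal (h ((φ u - s') / a) / a)
      = ENNReal.ofReal (h u) * ENNReal.ofReal a⁻¹ := by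
    intro u
    have : (φ u - s') / a = u := by simp only [hφ, add_sub_cancel_right]; exact mul_div_cancel_left₀ u ha'
    rw [this, div_eq_mul_inv, ENNReal.ofReal_mul (h_nonneg u)]
  rw [hpre] at key
  simp only [hcomp] at key
  rw [lintegral_mul_const _ h_meas.ennreal_ofReal] at key
  have hinv : |a⁻¹| = a⁻¹ := abs_of_pos (by positivity)
  rw [hinv] at key
  -- key : ofReal a⁻¹ * LHS = RHS * ofReal a⁻¹
  have hne : ENNReal.ofReal a⁻¹ ≠ 0 := by
    simp [ENNReal.ofReal_eq_zero, not_le, inv_pos, ha]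
  have hnt : ENNReal.ofReal a⁻¹ ≠ ⊤ := ENNReal.ofReal_ne_top
  rw [mul_comm] at key
  exact (ENNReal.mul_right_inj hne hnt).mp (by simpa only [smul_eq_mul] using key)

/-- For nonnegative measurable `h : ℝ → ℝ` with `∫₀^∞ s h(s) ds < ∞`, and any `a, z > 0`,
`∫₀^z ∫_z^∞ h((s-s')/a)/a ds ds' ≤ a ∫₀^∞ s h(s) ds`. -/
theorem tail_double_integral_bound (a z : ℝ) (ha : 0 < a) (hz : 0 < z)
    (h : ℝ → ℝ) (h_nonneg : ∀ t, 0 ≤ h t) (h_meas : Measurable h)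
    (h_int : IntegrableOn (fun s => s * h s) (Set.Ici 0)) :
    (∫ s' in (0:ℝ)..z, ∫ s in Set.Ici z, h ((s - s') / a) / a)
      ≤ a * ∫ s in Set.Ici (0:ℝ), s * h s := by
  set H : ℝ → ENNReal := fun u => ENNReal.ofReal (h u) with hH
  have hHm : Measurable H := ENNReal.measurable_ofReal.comp h_meas
  set J : ℝ → ENNReal := fun s' => ∫⁻ u in Set.Ici ((z - s') / a), H u with hJ
  set F : ℝ → ℝ → ENNReal := fun s' u => Set.indicator (Set.Ici ((z - s') / a)) H u with hF
  have hFunc : Function.uncurry F = fun p : ℝ × ℝ =>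
      Set.indicator {q : ℝ × ℝ | (z - q.1) / a ≤ q.2} (fun q => H q.2) p := by
    ext p
    simp only [Function.uncurry, hF, Set.indicator_apply, Set.mem_Ici, Set.mem_setOf_eq]
  have hsetm : MeasurableSet {q : ℝ × ℝ | (z - q.1) / a ≤ q.2} :=
    measurableSet_le (((measurable_const.sub measurable_fst)).div_const a) measurable_snd
  have hFm : Measurable (Function.uncurry F) := by
    rw [hFunc]
    exact (hHm.comp measurable_snd).indicator hsetm
  have hJF : ∀ s', J s' = ∫⁻ u, F s' u := by
    intro s'
    rw [hJ]
    simp only [hF]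
    rw [lintegral_indicator measurableSet_Ici]
  have hJm : Measurable J := by
    have h1 : Measurable fun s' => ∫⁻ u, F s' u ∂(volume) := Measurable.lintegral_prod_right hFm
    rw [funext hJF]
    exact h1
  -- the key lintegral bound via Tonelli
  set I := ∫ s in Set.Ici (0:ℝ), s * h s with hI
  have hI_nonneg : 0 ≤ I := setIntegral_nonneg measurableSet_Ici fun u hu =>
    mul_nonneg hu (h_nonneg u)
  have hK : (∫⁻ s' in Set.Ioc (0:ℝ) z, J s') ≤ ENNReal.ofReal (a * I) := by
    have hswap : (∫⁻ s' in Set.Ioc (0:ℝ) z, J s')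
        = ∫⁻ u, ∫⁻ s' in Set.Ioc (0:ℝ) z, F s' u := by
      simp only [hJF]
      exact lintegral_lintegral_swap (hFm.aemeasurable)
    rw [hswap]
    have hinner : ∀ u : ℝ, (∫⁻ s' in Set.Ioc (0:ℝ) z, F s' u) ≤ H u * ENNReal.ofReal (a * u) := by
      intro u
      have hset : ∀ s' : ℝ, F s' u = Set.indicator (Set.Ici (z - a * u)) (fun _ => H u) s' := by
        intro s'
        simp only [hF, Set.indicator_apply, Set.mem_Ici]
        congr 1
        simp only [eq_iff_iff]
        rw [div_le_iff₀ ha, mul_comm]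
        constructor <;> intro hu <;> linarith
      simp only [hset]
      rw [lintegral_indicator measurableSet_Ici, setLIntegral_const]
      have hsub : Set.Ici (z - a * u) ∩ Set.Ioc 0 z ⊆ Set.Icc (z - a * u) z := by
        rintro x ⟨hx1, hx2⟩
        exact ⟨hx1, hx2.2⟩
      have hvol : (volume.restrict (Set.Ioc 0 z)) (Set.Ici (z - a * u))
          ≤ ENNReal.ofReal (a * u) := by
        rw [Measure.restrict_apply measurableSet_Ici]
        calc volume (Set.Ici (z - a * u) ∩ Set.Ioc 0 z) ≤ volume (Set.Icc (z - a * u) z) :=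
              measure_mono hsub
          _ = ENNReal.ofReal (z - (z - a * u)) := Real.volume_Icc
          _ = ENNReal.ofReal (a * u) := by ring_nf
      exact mul_le_mul_right hvol _
    calc (∫⁻ u, ∫⁻ s' in Set.Ioc (0:ℝ) z, F s' u)
        ≤ ∫⁻ u, H u * ENNReal.ofReal (a * u) := lintegral_mono hinner
      _ = ∫⁻ u in Set.Ici (0:ℝ), H u * ENNReal.ofReal (a * u) := by
          rw [← lintegral_indicator measurableSet_Ici]
          congr 1
          funext u
          rw [Set.indicator_apply]
          split_ifs with hu
          · rfl
          · have : a * u ≤ 0 := mul_nonpos_of_nonneg_of_nonpos ha.le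
              (le_of_not_ge (by simpa using hu))
            rw [ENNReal.ofReal_eq_zero.2 this, mul_zero]
      _ = ∫⁻ u in Set.Ici (0:ℝ), ENNReal.ofReal a * ENNReal.ofReal (u * h u) := by
          refine setLIntegral_congr_fun measurableSet_Ici (fun u hu => ?_)
          rw [hH]
          rw [← ENNReal.ofReal_mul (h_nonneg u), ← ENNReal.ofReal_mul ha.le]
          congr 1
          ring
      _ = ENNReal.ofReal a * ∫⁻ u in Set.Ici (0:ℝ), ENNReal.ofReal (u * h u) :=
          lintegral_const_mul _ (ENNReal.measurable_ofReal.comp (measurable_id.mul h_meas))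
      _ = ENNReal.ofReal a * ENNReal.ofReal I := by
          congr 1
          rw [hI, ← ofReal_integral_eq_lintegral_ofReal h_int]
          filter_upwards [ae_restrict_mem measurableSet_Ici] with u hu
          exact mul_nonneg hu (h_nonneg u)
      _ = ENNReal.ofReal (a * I) := (ENNReal.ofReal_mul ha.le).symm
  -- rewrite the LHS
  have hinner_eq : ∀ s' : ℝ, (∫ s in Set.Ici z, h ((s - s') / a) / a) = (J s').toReal := by
    intro s'
    rw [integral_eq_lintegral_of_nonneg_ae]
    · rw [lintegral_sub_div_ray a z s' ha h h_meas h_nonneg]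
    · exact Filter.Eventually.of_forall fun s => div_nonneg (h_nonneg _) ha.le
    · exact ((h_meas.comp ((measurable_id.sub_const s').div_const a)).div_const a).aestronglyMeasurable
  rw [intervalIntegral.integral_of_le hz.le]
  simp only [hinner_eq]
  have hKne : (∫⁻ s' in Set.Ioc (0:ℝ) z, J s') ≠ ⊤ :=
    (lt_of_le_of_lt hK ENNReal.ofReal_lt_top).ne
  have hJfin : ∀ᵐ s' ∂(volume.restrict (Set.Ioc (0:ℝ) z)), J s' < ⊤ :=
    ae_lt_top hJm hKne
  rw [integral_toReal hJm.aemeasurable hJfin]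
  calc (∫⁻ s' in Set.Ioc (0:ℝ) z, J s').toReal
      ≤ (ENNReal.ofReal (a * I)).toReal := ENNReal.toReal_mono ENNReal.ofReal_ne_top hK
    _ = a * I := ENNReal.toReal_ofReal (mul_nonneg ha.le hI_nonneg)
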